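/- Let G be a finite directed acyclic graph with source s and sink t such that every vertex and edge lies on some directed s-t path, no vertex other than possibly s and t has total degree 1, no two adjacent vertices both have total degree 2 (unless one is s or t), and G admits a tracking set T of size at most k. Then G has at most 5(k+1)² vertices and at most 6(k+1)² edges. -/

import Mathlib

/-- A directed path from `s` to `t` in the digraph with edge relation `E`,
represented as its list of vertices. -/
def DiPath {V : Type*} (E : V → V → Prop) (s t : V) (p : List V) : Prop :=
  p.Chain' E ∧ p.Nodup ∧ p.head? = some s ∧ p.getLast? = some t

/-- `T` is a tracking set: any two distinct directed `s`-`t` paths intersect `T`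
in distinct subsets. -/
def Tracking {V : Type*} [DecidableEq V] (E : V → V → Prop) (s t : V) (T : Finset V) : Prop :=
  ∀ p q : List V, DiPath E s t p → DiPath E s t q →
    p.toFinset ∩ T = q.toFinset ∩ T → p = q

/-- The digraph with edge relation `E` has no directed cycle. -/
def DiAcyclic {V : Type*} (E : V → V → Prop) : Prop :=
  ∀ v : V, ¬ Relation.TransGen E v v

/-- `z` is reachable from `x` by a directed path avoiding all vertices of
`(T ∪ {t}) \ {x}`, i.e. `z ∈ Z_x`. -/
def ZReach {V : Type*} [DecidableEq V] (E : V → V → Prop) (T : Finset V) (t x z : V) : Prop :=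
  ∃ p : List V, p.Chain' E ∧ p.Nodup ∧ p.head? = some x ∧ p.getLast? = some z ∧
    ∀ v ∈ p, v ∈ T ∪ {t} → v = x

/-- `b` is reachable from `x` by a directed path avoiding all vertices of
`(T ∪ {t}) \ {x, b}`. -/
def BReach {V : Type*} [DecidableEq V] (E : V → V → Prop) (T : Finset V) (t x b : V) : Prop :=
  ∃ p : List V, p.Chain' E ∧ p.Nodup ∧ p.head? = some x ∧ p.getLast? = some b ∧
    ∀ v ∈ p, v ∈ T ∪ {t} → v = x ∨ v = b

/-- The out-degree of `z`. -/
def outdeg {V : Type*} [Fintype V] (E : V → V → Prop) [DecidableRel E] (z : V) : ℕ :=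
  (Finset.univ.filter fun y => E z y).card

/-- The in-degree of `z`. -/
def indeg {V : Type*} [Fintype V] (E : V → V → Prop) [DecidableRel E] (z : V) : ℕ :=
  (Finset.univ.filter fun y => E y z).card

set_option maxHeartbeats 1000000
open List

section Helpers
set_option linter.unusedSectionVars false
variable {V : Type*} {E : V → V → Prop}


lemma mem_of_getLast?' {l : List V} {a : V} (h : l.getLast? = some a) : a ∈ l := by
  obtain ⟨h', rfl⟩ := List.mem_getLast?_eq_getLast (by rw [h]; rfl)
  exact List.getLast_mem h'

lemma singleton_of_head_last {l : List V} {a : V} (hn : l.Nodup) (hh : l.head? = some a)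
    (hl : l.getLast? = some a) : l = [a] := by
  cases l with
  | nil => simp at hh
  | cons x xs =>
    have hx : x = a := by simpa using hh
    cases xs with
    | nil => rw [hx]
    | cons y ys =>
      exfalso
      rw [List.getLast?_cons_cons] at hl
      have hmem : a ∈ y :: ys := mem_of_getLast?' hl
      rw [← hx] at hmem
      exact (List.nodup_cons.mp hn).1 hmem

lemma chain'_transGen_cons :
    ∀ {l : List V} {a b : V}, (a :: l).Chain' E → b ∈ l → Relation.TransGen E a b := by
  intro l
  induction l with
  | nil => intro a b _ h; simp at h
  | cons y ys ih =>
    intro a b hc hb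
    have hay : E a y := (List.isChain_cons_cons.mp hc).1
    rcases List.mem_cons.mp hb with rfl | hb
    · exact Relation.TransGen.single hay
    · exact (Relation.TransGen.single hay).trans (ih (List.isChain_cons_cons.mp hc).2 hb)

lemma chain'_transGen_of_head {l : List V} {a b : V} (hc : l.Chain' E)
    (hh : l.head? = some a) (hb : b ∈ l) : b = a ∨ Relation.TransGen E a b := by
  cases l with
  | nil => simp at hh
  | cons x xs =>
    have hx : x = a := by simpa using hh
    rw [hx] at hc hb
    rcases List.mem_cons.mp hb with rfl | hb
    · exact Or.inl rfl
    · exact Or.inr (chain'_transGen_cons hc hb)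

lemma chain'_transGen_of_last {l : List V} {a b : V}
    (hc : l.Chain' E) (hl : l.getLast? = some a) (hb : b ∈ l) :
    b = a ∨ Relation.TransGen E b a := by
  have hc' : l.reverse.Chain' (flip E) := by
    rw [List.Chain', List.isChain_reverse]; simpa [Function.flip_def, List.Chain'] using hc
  have hh : l.reverse.head? = some a := by rw [List.head?_reverse]; exact hl
  rcases chain'_transGen_of_head hc' hh (by simpa using hb) with h | h
  · exact Or.inl h
  · exact Or.inr (Relation.transGen_swap.mp h)

lemma chain'_exists_succ :
    ∀ {l : List V} {c b : V}, l.Chain' E → l.getLast? = some c → b ∈ l → b ≠ c →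
      ∃ y, E b y := by
  intro l
  induction l with
  | nil => intro c b _ h; simp at h
  | cons x xs ih =>
    intro c b hc hl hb hbc
    cases xs with
    | nil =>
      have h1 : x = c := by simpa using hl
      have h2 : b = x := by simpa using hb
      exact absurd (h2.trans h1) hbc
    | cons y ys =>
      rcases List.mem_cons.mp hb with rfl | hb
      · exact ⟨y, (List.isChain_cons_cons.mp hc).1⟩
      · exact ih (List.isChain_cons_cons.mp hc).2 (by rw [← hl, List.getLast?_cons_cons]) hb hbc

/-- glue: chain of `l ++ l2` when `l` ends at `a` and `a :: l2` is a chain. -/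
lemma chain'_glue {l l2 : List V} {a : V}
    (h1 : l.Chain' E) (h2 : (a :: l2).Chain' E) (hl : l.getLast? = some a) :
    (l ++ l2).Chain' E := by
  rw [List.Chain', List.isChain_append]
  refine ⟨h1, h2.tail, ?_⟩
  intro x hx y hy
  rw [hl] at hx
  have hxa : a = x := by simpa using hx
  cases l2 with
  | nil => simp at hy
  | cons z zs =>
    have hyz : z = y := by simpa using hy
    have hz : E a z := (List.isChain_cons_cons.mp h2).1
    exact hyz ▸ hxa ▸ hz

lemma head?_append_left {l l' : List V} {a : V} (h : l.head? = some a) :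
    (l ++ l').head? = some a := by
  rw [List.head?_append, h]; rfl

lemma getLast?_append_right {l l' : List V} {a : V} (h : l'.getLast? = some a) :
    (l ++ l').getLast? = some a := by
  rw [List.getLast?_append, h]; rfl


end Helpers

section A
set_option linter.unusedSectionVars false
variable {V : Type*} [DecidableEq V] {E : V → V → Prop} {s t : V} {T : Finset V}

lemma head?_append_left_inv {l l' : List V} {a : V} (h : (l ++ l').head? = some a)
    (hne : l ≠ []) : l.head? = some a := by
  rw [List.head?_append] at h
  cases hl : l.head? with
  | none => exact absurd (List.head?_eq_none_iff.mp hl) hne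
  | some c => rw [hl] at h; simpa using h

lemma getLast?_append_right_inv {l l' : List V} {a : V} (h : (l ++ l').getLast? = some a)
    (hne : l' ≠ []) : l'.getLast? = some a := by
  rw [List.getLast?_append] at h
  cases hl : l'.getLast? with
  | none => exact absurd (List.getLast?_eq_none_iff.mp hl) hne
  | some c => rw [hl] at h; simpa using h

lemma chain'_glue2 {l m : List V} {a : V}
    (h1 : (l ++ [a]).Chain' E) (h2 : m.Chain' E) (hmh : m.head? = some a) :
    (l ++ m).Chain' E := by
  obtain ⟨hl, _, hlink⟩ := List.isChain_append.mp h1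
  rw [List.Chain', List.isChain_append]
  refine ⟨hl, h2, ?_⟩
  intro u hu y hy
  rw [hmh] at hy
  have hya : a = y := by simpa using hy
  exact hya ▸ hlink u hu a (by simp)

/-- Lemma A: uniqueness of T-clean paths between fixed endpoints. -/
theorem clean_unique (hacyc : DiAcyclic E)
    (hvert : ∀ v : V, ∃ p : List V, DiPath E s t p ∧ v ∈ p)
    (hT : Tracking E s t T) {x b : V} {p q : List V}
    (hpc : p.Chain' E) (hpn : p.Nodup) (hph : p.head? = some x)
    (hpl : p.getLast? = some b) (hpT : ∀ v ∈ p, v ∈ T → v = x ∨ v = b)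
    (hqc : q.Chain' E) (hqn : q.Nodup) (hqh : q.head? = some x)
    (hql : q.getLast? = some b) (hqT : ∀ v ∈ q, v ∈ T → v = x ∨ v = b) :
    p = q := by
  by_cases hxb : x = b
  · subst hxb
    rw [singleton_of_head_last hpn hph hpl, singleton_of_head_last hqn hqh hql]
  · obtain ⟨P, hP, hxP⟩ := hvert x
    obtain ⟨P₁, P₂, rfl⟩ := List.append_of_mem hxP
    obtain ⟨hPc, hPn, hPh, hPt⟩ := hP
    obtain ⟨P', hP', hbP'⟩ := hvert b
    obtain ⟨Q₁, Q₂, rfl⟩ := List.append_of_mem hbP'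
    obtain ⟨hQc, hQn, hQh, hQt⟩ := hP'
    -- r1 = P₁ ++ [x] facts
    have hsplit : P₁ ++ x :: P₂ = (P₁ ++ [x]) ++ P₂ := by simp
    rw [hsplit] at hPc hPn
    have hr1c : (P₁ ++ [x]).Chain' E := (List.isChain_append.mp hPc).1
    have hr1n : (P₁ ++ [x]).Nodup := (List.nodup_append'.mp hPn).1
    have hr1l : (P₁ ++ [x]).getLast? = some x := List.getLast?_concat
    have hxP₁ : x ∉ P₁ := by
      have := (List.nodup_append'.mp hr1n).2.2
      intro hx; exact this hx (by simp)
    -- r2 = b :: Q₂ facts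
    have hr2c : (b :: Q₂).Chain' E := (List.isChain_append.mp hQc).2.1
    have hr2n : (b :: Q₂).Nodup := (List.nodup_append'.mp hQn).2.1
    have hbQ₂ : b ∉ Q₂ := (List.nodup_cons.mp hr2n).1
    have hr2l : (b :: Q₂).getLast? = some t := getLast?_append_right_inv hQt (by simp)
    -- transGen facts
    have hP₁x : ∀ v ∈ P₁, Relation.TransGen E v x := by
      intro v hv
      rcases chain'_transGen_of_last (b := v) hr1c hr1l (by simp [hv]) with rfl | h
      · exact absurd hv hxP₁
      · exact h
    have hbQ : ∀ v ∈ Q₂, Relation.TransGen E b v := fun v hv => chain'_transGen_cons hr2c hv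
    -- the main construction
    have key : ∀ m : List V, m.Chain' E → m.Nodup → m.head? = some x →
        m.getLast? = some b → DiPath E s t ((P₁ ++ m) ++ Q₂) := by
      intro m hmc hmn hmh hml
      have hbm : b ∈ m := mem_of_getLast?' hml
      have hxm : x ∈ m := List.mem_of_mem_head? (by rw [hmh]; rfl)
      have htrxb : Relation.TransGen E x b := by
        rcases chain'_transGen_of_head hmc hmh hbm with rfl | h
        · exact absurd rfl hxb
        · exact h
      have hmem1 : ∀ v ∈ m, v = x ∨ Relation.TransGen E x v :=
        fun v hv => chain'_transGen_of_head hmc hmh hv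
      have hmem2 : ∀ v ∈ m, v = b ∨ Relation.TransGen E v b :=
        fun v hv => chain'_transGen_of_last hmc hml hv
      -- nodup of A := P₁ ++ m
      have hdisj1 : P₁.Disjoint m := by
        intro v hv1 hv2
        have h1 := hP₁x v hv1
        rcases hmem1 v hv2 with rfl | h2
        · exact hxP₁ hv1
        · exact hacyc v (h1.trans h2)
      have hAn : (P₁ ++ m).Nodup :=
        List.nodup_append'.mpr ⟨(List.nodup_append'.mp hPn).1.of_append_left, hmn, by
          intro v hv1 hv2
          exact hdisj1 (by exact hv1) hv2⟩
      have hAc : (P₁ ++ m).Chain' E := chain'_glue2 hr1c hmc hmh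
      have hAl : (P₁ ++ m).getLast? = some b := getLast?_append_right hml
      have hFn : ((P₁ ++ m) ++ Q₂).Nodup := by
        refine List.nodup_append'.mpr ⟨hAn, (List.nodup_cons.mp hr2n).2, ?_⟩
        intro v hv1 hv2
        have htbv : Relation.TransGen E b v := hbQ v hv2
        rcases List.mem_append.mp hv1 with hv | hv
        · exact hacyc v (((hP₁x v hv).trans htrxb).trans htbv)
        · rcases hmem2 v hv with rfl | h
          · exact hbQ₂ hv2
          · exact hacyc v (h.trans htbv)
      have hFc : ((P₁ ++ m) ++ Q₂).Chain' E := chain'_glue hAc hr2c hAl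
      have hFh : ((P₁ ++ m) ++ Q₂).head? = some s := by
        cases P₁ with
        | nil =>
          have hxs : x = s := by
            simpa using hPh
          simp only [List.nil_append]
          rw [head?_append_left hmh, hxs]
        | cons c l0 =>
          have h1 : (c :: l0).head? = some s := head?_append_left_inv hPh (by simp)
          exact head?_append_left (head?_append_left h1)
      have hFl : ((P₁ ++ m) ++ Q₂).getLast? = some t := by
        cases Q₂ with
        | nil =>
          have hbt : b = t := by simpa using hr2l
          rw [List.append_nil, getLast?_append_right hml, hbt]
        | cons c l0 =>
          have h1 : (c :: l0).getLast? = some t := by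
            rw [← List.getLast?_cons_cons (a := b)]; exact hr2l
          exact getLast?_append_right h1
      exact ⟨hFc, hFn, hFh, hFl⟩
    have hp' := key p hpc hpn hph hpl
    have hq' := key q hqc hqn hqh hql
    have hsets : ((P₁ ++ p) ++ Q₂).toFinset ∩ T = ((P₁ ++ q) ++ Q₂).toFinset ∩ T := by
      have hmemTeq : ∀ v ∈ T, (v ∈ p ↔ v ∈ q) := by
        intro v hvT
        constructor
        · intro hv
          rcases hpT v hv hvT with rfl | rfl
          · exact List.mem_of_mem_head? (by rw [hqh]; rfl)
          · exact mem_of_getLast?' hql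
        · intro hv
          rcases hqT v hv hvT with rfl | rfl
          · exact List.mem_of_mem_head? (by rw [hph]; rfl)
          · exact mem_of_getLast?' hpl
      ext v
      simp only [Finset.mem_inter, List.mem_toFinset, List.mem_append]
      by_cases hvT : v ∈ T
      · have hiff := hmemTeq v hvT; tauto
      · tauto
    have hfin := hT _ _ hp' hq' hsets
    exact List.append_cancel_left (List.append_cancel_right hfin)

end A

section B
set_option linter.unusedSectionVars false
variable {V : Type*} [DecidableEq V] {E : V → V → Prop} {s t : V} {T : Finset V}

lemma extract (T : Finset V) (t : V) :
    ∀ r : List V, r.Chain' E → r.Nodup → r ≠ [] → (∀ w ∈ r, w ≠ t) →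
      ∃ x p, p.Chain' E ∧ p.Nodup ∧ p.head? = some x ∧ p.getLast? = r.getLast? ∧
        (∀ w ∈ p, w ∈ T ∪ {t} → w = x) ∧ (x ∈ T ∨ (r.head? = some x ∧ p = r)) := by
  intro r
  induction r with
  | nil => intro _ _ h _; exact absurd rfl h
  | cons a rest ih =>
    intro hc hn _ hnt
    cases rest with
    | nil =>
      refine ⟨a, [a], by simp [List.Chain'], by simp, rfl, rfl, ?_, Or.inr ⟨rfl, rfl⟩⟩
      intro w hw _
      simpa using hw
    | cons y ys =>
      obtain ⟨x, pp, h1, h2, h3, h4, h5, h6⟩ :=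
        ih (List.isChain_cons_cons.mp hc).2 (List.nodup_cons.mp hn).2 (by simp)
          (fun w hw => hnt w (List.mem_cons_of_mem _ hw))
      have hlast : (y :: ys).getLast? = (a :: y :: ys).getLast? :=
        (List.getLast?_cons_cons).symm
      rcases h6 with hxT | ⟨hhead, rfl⟩
      · exact ⟨x, pp, h1, h2, h3, h4.trans hlast, h5, Or.inl hxT⟩
      · by_cases hxT : x ∈ T
        · exact ⟨x, y :: ys, h1, h2, h3, h4.trans hlast, h5, Or.inl hxT⟩
        · have hxy : y = x := by simpa using hhead
          have hxt : x ≠ t := by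
            refine hnt x ?_
            rw [← hxy]; simp
          have hxnot : x ∉ T ∪ ({t} : Finset V) := by
            simp only [Finset.mem_union, Finset.mem_singleton]
            rintro (h | h) <;> [exact hxT h; exact hxt h]
          refine ⟨a, a :: y :: ys, hc, hn, rfl, rfl, ?_, Or.inr ⟨rfl, rfl⟩⟩
          intro w hw hwT
          rcases List.mem_cons.mp hw with rfl | hw
          · rfl
          · exact absurd ((h5 w hw hwT) ▸ hwT) hxnot

lemma exists_zreach (hvert : ∀ v : V, ∃ p : List V, DiPath E s t p ∧ v ∈ p)
    (v : V) (hvt : v ≠ t) : ∃ x, (x ∈ T ∨ x = s) ∧ ZReach E T t x v := by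
  obtain ⟨P, ⟨hPc, hPn, hPh, hPl⟩, hvP⟩ := hvert v
  obtain ⟨P₁, P₂, rfl⟩ := List.append_of_mem hvP
  have hsplit : P₁ ++ v :: P₂ = (P₁ ++ [v]) ++ P₂ := by simp
  rw [hsplit] at hPc hPn hPh hPl
  have hr1c : (P₁ ++ [v]).Chain' E := (List.isChain_append.mp hPc).1
  have hr1n : (P₁ ++ [v]).Nodup := (List.nodup_append'.mp hPn).1
  have htmem : t ∈ v :: P₂ := by
    have h1 : (v :: P₂).getLast? = some t := by
      have h2 : (P₁ ++ (v :: P₂)).getLast? = some t := by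
        rw [show P₁ ++ (v :: P₂) = (P₁ ++ [v]) ++ P₂ by simp]; exact hPl
      exact getLast?_append_right_inv h2 (by simp)
    exact mem_of_getLast?' h1
  have hnt : ∀ w ∈ P₁ ++ [v], w ≠ t := by
    intro w hw hwt
    subst hwt
    rcases List.mem_append.mp hw with hw | hw
    · have hdis : P₁.Disjoint (v :: P₂) := by
        have : (P₁ ++ (v :: P₂)).Nodup := by
          rw [show P₁ ++ (v :: P₂) = (P₁ ++ [v]) ++ P₂ by simp]
          exact hPn
        exact (List.nodup_append'.mp (by simpa using this)).2.2
      exact hdis hw htmem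
    · have : w = v := by simpa using hw
      exact hvt this.symm
  obtain ⟨x, p, h1, h2, h3, h4, h5, h6⟩ :=
    extract T t (P₁ ++ [v]) hr1c hr1n (by simp) hnt
  have hlastv : p.getLast? = some v := by rw [h4]; exact List.getLast?_concat
  refine ⟨x, ?_, ⟨p, h1, h2, h3, hlastv, h5⟩⟩
  rcases h6 with h | ⟨hh, _⟩
  · exact Or.inl h
  · right
    have := head?_append_left_inv hPh (by simp)
    rw [this] at hh
    exact (Option.some_injective _ hh).symm

lemma zstep {x u v : V} {p : List V} (hacyc : DiAcyclic E)
    (hc : p.Chain' E) (hn : p.Nodup) (hh : p.head? = some x) (hl : p.getLast? = some u)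
    (hsh : ∀ w ∈ p, w ∈ T ∪ {t} → w = x) (huv : E u v) :
    (p ++ [v]).Chain' E ∧ (p ++ [v]).Nodup ∧ (p ++ [v]).head? = some x ∧
      (p ++ [v]).getLast? = some v ∧
      (∀ w ∈ p ++ [v], w ∈ T ∪ {t} → w = x ∨ w = v) ∧
      (v ∉ T ∪ ({t} : Finset V) → ∀ w ∈ p ++ [v], w ∈ T ∪ {t} → w = x) := by
  have hvp : v ∉ p := by
    intro hvp
    rcases chain'_transGen_of_last (b := v) hc hl hvp with rfl | h
    · exact hacyc v (Relation.TransGen.single huv)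
    · exact hacyc v (h.trans (Relation.TransGen.single huv))
  refine ⟨?_, ?_, head?_append_left hh, List.getLast?_concat, ?_, ?_⟩
  · exact chain'_glue hc (by simp [List.Chain', huv]) hl
  · exact List.nodup_append'.mpr ⟨hn, by simp, by
      intro w hw1 hw2
      rw [List.mem_singleton] at hw2
      subst hw2
      exact hvp hw1⟩
  · intro w hw hwT
    rcases List.mem_append.mp hw with hw | hw
    · exact Or.inl (hsh w hw hwT)
    · exact Or.inr (by simpa using hw)
  · intro hvT w hw hwT
    rcases List.mem_append.mp hw with hw | hw
    · exact hsh w hw hwT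
    · exact absurd hwT (by rw [show w = v by simpa using hw]; exact hvT)

lemma per_x [Fintype V] [DecidableRel E] (hacyc : DiAcyclic E) (hsink : ∀ v : V, ¬ E t v)
    (hvert : ∀ v : V, ∃ p : List V, DiPath E s t p ∧ v ∈ p)
    (hT : Tracking E s t T) {x : V} (Z : Finset V)
    (hZ : ∀ v, v ∈ Z ↔ ZReach E T t x v) :
    ∑ v ∈ Z.filter (fun v => 2 ≤ outdeg E v), (outdeg E v - 1) ≤ T.card := by
  classical
  by_cases hxt : x = t
  · subst hxt
    have hempty : Z.filter (fun v => 2 ≤ outdeg E v) = ∅ := by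
      rw [Finset.filter_eq_empty_iff]
      intro v hv
      obtain ⟨p, hc, hn, hh, hl, hsh⟩ := (hZ v).mp hv
      cases p with
      | nil => simp at hh
      | cons a rest =>
        have hat : a = x := by simpa using hh
        cases rest with
        | cons y ys => exact absurd (List.isChain_cons_cons.mp (hat ▸ hc)).1 (hsink y)
        | nil =>
          have hav : a = v := by simpa using hl
          have hvz : outdeg E v = 0 := by
            rw [← hav, hat]
            exact Finset.card_eq_zero.mpr
              (Finset.filter_eq_empty_iff.mpr (fun y _ => hsink y))
          simp [hvz]
    rw [hempty]; simp
  · have hvne : ∀ v ∈ Z, v ≠ t := by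
      intro v hv hvt
      subst hvt
      obtain ⟨p, hc, hn, hh, hl, hsh⟩ := (hZ v).mp hv
      exact hxt (hsh v (mem_of_getLast?' hl) (by simp)).symm
    have hout1 : ∀ v ∈ Z, 1 ≤ outdeg E v := by
      intro v hv
      obtain ⟨P, ⟨hPc, hPn, hPh, hPl⟩, hvP⟩ := hvert v
      obtain ⟨y, hy⟩ := chain'_exists_succ hPc hPl hvP (hvne v hv)
      exact Finset.card_pos.mpr ⟨y, by simp [hy]⟩
    have hxZ : x ∈ Z := (hZ x).mpr
      ⟨[x], by simp [List.Chain'], by simp, rfl, by simp, by intro w hw _; simpa using hw⟩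
    have hkey : ∀ u ∈ Z, ∀ u' ∈ Z, ∀ v : V, E u v → E u' v → u = u' := by
      intro u hu u' hu' v huv hu'v
      obtain ⟨p, hc, hn, hh, hl, hsh⟩ := (hZ u).mp hu
      obtain ⟨p', hc', hn', hh', hl', hsh'⟩ := (hZ u').mp hu'
      obtain ⟨c1, n1, hh1, hl1, sh1, _⟩ := zstep hacyc hc hn hh hl hsh huv
      obtain ⟨c1', n1', hh1', hl1', sh1', _⟩ := zstep hacyc hc' hn' hh' hl' hsh' hu'v
      have sh1T : ∀ w ∈ p ++ [v], w ∈ T → w = x ∨ w = v :=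
        fun w hw hwT => sh1 w hw (Finset.mem_union_left _ hwT)
      have sh1T' : ∀ w ∈ p' ++ [v], w ∈ T → w = x ∨ w = v :=
        fun w hw hwT => sh1' w hw (Finset.mem_union_left _ hwT)
      have heq := clean_unique hacyc hvert hT c1 n1 hh1 hl1 sh1T c1' n1' hh1' hl1' sh1T'
      have hpp : p = p' := List.append_cancel_right heq
      rw [hpp] at hl
      rw [hl] at hl'
      exact Option.some_injective _ hl'
    set C : V → Finset V := fun u => Finset.univ.filter (fun v => E u v ∧ v ∉ T ∪ {t})
      with hCdef
    set D : V → Finset V := fun u => Finset.univ.filter (fun v => E u v ∧ v ∈ T ∪ {t})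
      with hDdef
    have hsplitdeg : ∀ u, outdeg E u = (D u).card + (C u).card := by
      intro u
      have h := Finset.card_filter_add_card_filter_not
        (s := Finset.univ.filter (fun v => E u v)) (p := fun v => v ∈ T ∪ {t})
      rw [Finset.filter_filter, Finset.filter_filter] at h
      exact h.symm
    have hCdisj : ∀ u ∈ Z, ∀ u' ∈ Z, u ≠ u' → Disjoint (C u) (C u') := by
      intro u hu u' hu' hne
      rw [Finset.disjoint_left]
      intro v hv hv'
      rw [hCdef] at hv hv'
      simp only [Finset.mem_filter] at hv hv'
      exact hne (hkey u hu u' hu' v hv.2.1 hv'.2.1)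
    have hDdisj : ∀ u ∈ Z, ∀ u' ∈ Z, u ≠ u' → Disjoint (D u) (D u') := by
      intro u hu u' hu' hne
      rw [Finset.disjoint_left]
      intro v hv hv'
      rw [hDdef] at hv hv'
      simp only [Finset.mem_filter] at hv hv'
      exact hne (hkey u hu u' hu' v hv.2.1 hv'.2.1)
    have hCsub : ∀ u ∈ Z, C u ⊆ Z.erase x := by
      intro u hu v hv
      rw [hCdef] at hv
      simp only [Finset.mem_filter, Finset.mem_univ, true_and] at hv
      obtain ⟨huv, hvnT⟩ := hv
      obtain ⟨p, hc, hn, hh, hl, hsh⟩ := (hZ u).mp hu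
      obtain ⟨c1, n1, hh1, hl1, _, hstrong⟩ := zstep hacyc hc hn hh hl hsh huv
      have hvZ : v ∈ Z := (hZ v).mpr ⟨p ++ [v], c1, n1, hh1, hl1, hstrong hvnT⟩
      refine Finset.mem_erase.mpr ⟨?_, hvZ⟩
      intro hvx
      have hxp : x ∈ p := List.mem_of_mem_head? (by rw [hh]; rfl)
      have hd := (List.nodup_append'.mp n1).2.2
      exact hd (hvx ▸ hxp) (by simp)
    have hDsub : ∀ u ∈ Z, D u ⊆ T ∪ {t} := by
      intro u hu v hv
      rw [hDdef] at hv
      simp only [Finset.mem_filter] at hv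
      exact hv.2.2
    have hsum : ∑ u ∈ Z, outdeg E u ≤ (T ∪ {t}).card + (Z.erase x).card := by
      calc ∑ u ∈ Z, outdeg E u = ∑ u ∈ Z, ((D u).card + (C u).card) :=
            Finset.sum_congr rfl (fun u _ => hsplitdeg u)
        _ = ∑ u ∈ Z, (D u).card + ∑ u ∈ Z, (C u).card := Finset.sum_add_distrib
        _ = (Z.biUnion D).card + (Z.biUnion C).card := by
            rw [Finset.card_biUnion hDdisj, Finset.card_biUnion hCdisj]
        _ ≤ (T ∪ {t}).card + (Z.erase x).card :=
            add_le_add (Finset.card_le_card (Finset.biUnion_subset.mpr hDsub))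
              (Finset.card_le_card (Finset.biUnion_subset.mpr hCsub))
    have h1 : ∑ v ∈ Z.filter (fun v => 2 ≤ outdeg E v), (outdeg E v - 1) ≤
        ∑ v ∈ Z, (outdeg E v - 1) :=
      Finset.sum_le_sum_of_subset (Finset.filter_subset _ _)
    have h2 : ∑ v ∈ Z, (outdeg E v - 1) + Z.card = ∑ v ∈ Z, outdeg E v := by
      rw [Finset.card_eq_sum_ones, ← Finset.sum_add_distrib]
      exact Finset.sum_congr rfl (fun v hv => Nat.sub_add_cancel (hout1 v hv))
    have hZcard : 1 ≤ Z.card := Finset.card_pos.mpr ⟨x, hxZ⟩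
    have hErase : (Z.erase x).card = Z.card - 1 := Finset.card_erase_of_mem hxZ
    have hTt : (T ∪ {t}).card ≤ T.card + 1 :=
      le_trans (Finset.card_union_le _ _) (by simp)
    omega

lemma branch_bound [Fintype V] [DecidableRel E] (hacyc : DiAcyclic E)
    (hsink : ∀ v : V, ¬ E t v)
    (hvert : ∀ v : V, ∃ p : List V, DiPath E s t p ∧ v ∈ p)
    (hT : Tracking E s t T) (k : ℕ) (hTk : T.card ≤ k) :
    ∑ v ∈ Finset.univ.filter (fun v => 2 ≤ outdeg E v), (outdeg E v - 1) ≤ (k + 1) * k := by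
  classical
  have houtt : outdeg E t = 0 :=
    Finset.card_eq_zero.mpr (Finset.filter_eq_empty_iff.mpr (fun y _ => hsink y))
  have hex : ∀ v ∈ Finset.univ.filter (fun v => 2 ≤ outdeg E v),
      ∃ x, x ∈ insert s T ∧ ZReach E T t x v := by
    intro v hv
    rw [Finset.mem_filter] at hv
    have hvt : v ≠ t := by
      intro h
      rw [h, houtt] at hv
      omega
    obtain ⟨x, hx, hzr⟩ := exists_zreach hvert v hvt
    refine ⟨x, ?_, hzr⟩
    rcases hx with h | h
    · exact Finset.mem_insert_of_mem h
    · rw [h]; exact Finset.mem_insert_self _ _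
  set f : V → V := fun v =>
    if h : ∃ x, x ∈ insert s T ∧ ZReach E T t x v then h.choose else s with hf
  have hfz : ∀ v, (∃ x, x ∈ insert s T ∧ ZReach E T t x v) →
      f v ∈ insert s T ∧ ZReach E T t (f v) v := by
    intro v h
    rw [hf]
    simp only
    rw [dif_pos h]
    exact h.choose_spec
  have hmaps : ∀ v ∈ Finset.univ.filter (fun v => 2 ≤ outdeg E v), f v ∈ insert s T :=
    fun v hv => (hfz v (hex v hv)).1
  have hfib := Finset.sum_fiberwise_of_maps_to hmaps (fun v => outdeg E v - 1)
  rw [← hfib]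
  have hinner : ∀ x ∈ insert s T,
      ∑ v ∈ (Finset.univ.filter (fun v => 2 ≤ outdeg E v)).filter (fun v => f v = x),
        (outdeg E v - 1) ≤ T.card := by
    intro x hx
    have hsub : (Finset.univ.filter (fun v => 2 ≤ outdeg E v)).filter (fun v => f v = x) ⊆
        (Finset.univ.filter (fun v => ZReach E T t x v)).filter (fun v => 2 ≤ outdeg E v) := by
      intro v hv
      rw [Finset.mem_filter] at hv
      obtain ⟨hvO, hfv⟩ := hv
      have h2 : 2 ≤ outdeg E v := (Finset.mem_filter.mp hvO).2
      have hzr : ZReach E T t (f v) v := (hfz v (hex v hvO)).2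
      rw [hfv] at hzr
      exact Finset.mem_filter.mpr ⟨Finset.mem_filter.mpr ⟨Finset.mem_univ _, hzr⟩, h2⟩
    refine le_trans (Finset.sum_le_sum_of_subset hsub) ?_
    exact per_x hacyc hsink hvert hT (x := x) _ (fun v => by simp)
  refine le_trans (Finset.sum_le_sum hinner) ?_
  rw [Finset.sum_const, smul_eq_mul]
  exact Nat.mul_le_mul (le_trans (Finset.card_insert_le _ _) (by omega)) hTk

lemma dipath_reverse (hp : DiPath E s t p) : DiPath (flip E) t s p.reverse := by
  obtain ⟨hc, hn, hh, hl⟩ := hp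
  refine ⟨?_, by simpa using hn, by rw [List.head?_reverse]; exact hl, ?_⟩
  · rw [List.Chain', List.isChain_reverse]
    exact hc
  · rw [List.getLast?_reverse]
    exact hh

lemma tracking_flip (hT : Tracking E s t T) : Tracking (flip E) t s T := by
  intro p q hp hq hpq
  have hp' : DiPath E s t p.reverse := by
    obtain ⟨hc, hn, hh, hl⟩ := hp
    refine ⟨?_, by simpa using hn, by rw [List.head?_reverse]; exact hl, ?_⟩
    · rw [List.Chain', List.isChain_reverse]; exact hc
    · rw [List.getLast?_reverse]; exact hh
  have hq' : DiPath E s t q.reverse := by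
    obtain ⟨hc, hn, hh, hl⟩ := hq
    refine ⟨?_, by simpa using hn, by rw [List.head?_reverse]; exact hl, ?_⟩
    · rw [List.Chain', List.isChain_reverse]; exact hc
    · rw [List.getLast?_reverse]; exact hh
  have := hT p.reverse q.reverse hp' hq' (by simpa using hpq)
  exact List.reverse_injective this

lemma branch_bound_in [Fintype V] [DecidableRel E] (hacyc : DiAcyclic E)
    (hsrc : ∀ v : V, ¬ E v s)
    (hvert : ∀ v : V, ∃ p : List V, DiPath E s t p ∧ v ∈ p)
    (hT : Tracking E s t T) (k : ℕ) (hTk : T.card ≤ k) :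
    ∑ v ∈ Finset.univ.filter (fun v => 2 ≤ indeg E v), (indeg E v - 1) ≤ (k + 1) * k := by
  letI instFlip : DecidableRel (flip E) := fun a b => inferInstanceAs (Decidable (E b a))
  have h1 : DiAcyclic (flip E) := fun v hv => hacyc v (Relation.transGen_swap.mp hv)
  have h2 : ∀ v : V, ¬ (flip E) s v := fun v h => hsrc v h
  have h3 : ∀ v : V, ∃ p : List V, DiPath (flip E) t s p ∧ v ∈ p := by
    intro v
    obtain ⟨p, hp, hv⟩ := hvert v
    exact ⟨p.reverse, dipath_reverse hp, by simpa using hv⟩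
  have h4 : Tracking (flip E) t s T := tracking_flip hT
  have hmain := branch_bound (E := flip E) (s := t) (t := s) h1 h2 h3 h4 k hTk
  have hdeg : ∀ v, outdeg (flip E) v = indeg E v := by
    intro v
    have hset : (Finset.univ.filter fun y => (flip E) v y) =
        (Finset.univ.filter fun y => E y v) := by
      ext y
      rw [Finset.mem_filter, Finset.mem_filter]
      rfl
    unfold outdeg indeg
    rw [hset]
  simpa only [hdeg] using hmain

end B


/-- quadratic kernel bound for reduced DAG instances. -/
theorem dag_quadratic_kernel_bound {V : Type*} [Fintype V] [DecidableEq V]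
    (E : V → V → Prop) [DecidableRel E] (s t : V)
    (hacyc : DiAcyclic E)
    (hsrc : ∀ v : V, ¬ E v s) (hsink : ∀ v : V, ¬ E t v)
    (hvert : ∀ v : V, ∃ p : List V, DiPath E s t p ∧ v ∈ p)
    (hedge : ∀ u v : V, E u v → ∃ p : List V, DiPath E s t p ∧ [u, v] <:+: p)
    (hdeg1 : ∀ v : V, v ≠ s → v ≠ t → 2 ≤ indeg E v + outdeg E v)
    (hdeg2 : ∀ u v : V, E u v →
      indeg E u + outdeg E u = 2 → indeg E v + outdeg E v = 2 →
      u = s ∨ u = t ∨ v = s ∨ v = t)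
    (k : ℕ) (T : Finset V) (hT : Tracking E s t T) (hTk : T.card ≤ k) :
    Fintype.card V ≤ 5 * (k + 1) ^ 2 ∧ (∑ v : V, outdeg E v) ≤ 6 * (k + 1) ^ 2 := by
  classical
  have hsq : (k + 1) ^ 2 = k * k + 2 * k + 1 := by ring
  have hm : (k + 1) * k = k * k + k := by ring
  by_cases hst : s = t
  · subst hst
    have hV : ∀ v : V, v = s := by
      intro v
      obtain ⟨p, ⟨hc, hn, hh, hl⟩, hv⟩ := hvert v
      have hps : p = [s] := singleton_of_head_last hn hh hl
      rw [hps] at hv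
      simpa using hv
    have hcard : Fintype.card V = 1 := by
      rw [Fintype.card_eq_one_iff]
      exact ⟨s, hV⟩
    have hout : ∀ v, outdeg E v = 0 := by
      intro v
      by_contra h
      obtain ⟨y, hy⟩ := Finset.card_pos.mp (Nat.pos_of_ne_zero h)
      have hy' : E v y := (Finset.mem_filter.mp hy).2
      obtain ⟨p, ⟨hc, hn, hh, hl⟩, hinf⟩ := hedge v y hy'
      have hps : p = [s] := singleton_of_head_last hn hh hl
      rw [hps] at hinf
      have := hinf.length_le
      simp at this
    constructor
    · rw [hcard]; nlinarith
    · simp [hout]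
  · set B := ∑ v ∈ Finset.univ.filter (fun v => 2 ≤ outdeg E v), (outdeg E v - 1) with hB
    set B' := ∑ v ∈ Finset.univ.filter (fun v => 2 ≤ indeg E v), (indeg E v - 1) with hB'
    have hBk : B ≤ (k + 1) * k := branch_bound hacyc hsink hvert hT k hTk
    have hB'k : B' ≤ (k + 1) * k := branch_bound_in hacyc hsrc hvert hT k hTk
    set W3 := Finset.univ.filter (fun v => v ≠ s ∧ v ≠ t ∧ 3 ≤ indeg E v + outdeg E v)
      with hW3
    set D2 := Finset.univ.filter (fun v => v ≠ s ∧ v ≠ t ∧ indeg E v + outdeg E v = 2)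
      with hD2
    have hcardO2 : (Finset.univ.filter (fun v => 2 ≤ outdeg E v)).card ≤ B := by
      rw [hB, Finset.card_eq_sum_ones]
      refine Finset.sum_le_sum (fun v hv => ?_)
      have := (Finset.mem_filter.mp hv).2
      omega
    have hcardI2 : (Finset.univ.filter (fun v => 2 ≤ indeg E v)).card ≤ B' := by
      rw [hB', Finset.card_eq_sum_ones]
      refine Finset.sum_le_sum (fun v hv => ?_)
      have := (Finset.mem_filter.mp hv).2
      omega
    have hW3card : W3.card ≤ B + B' := by
      have hsub : W3 ⊆ (Finset.univ.filter (fun v => 2 ≤ outdeg E v)) ∪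
          (Finset.univ.filter (fun v => 2 ≤ indeg E v)) := by
        intro v hv
        rw [hW3, Finset.mem_filter] at hv
        obtain ⟨_, _, _, h3⟩ := hv
        rw [Finset.mem_union, Finset.mem_filter, Finset.mem_filter]
        by_cases h : 2 ≤ outdeg E v
        · exact Or.inl ⟨Finset.mem_univ _, h⟩
        · exact Or.inr ⟨Finset.mem_univ _, by omega⟩
      calc W3.card ≤ _ := Finset.card_le_card hsub
        _ ≤ _ := Finset.card_union_le _ _
        _ ≤ B + B' := add_le_add hcardO2 hcardI2
    have hsucc : ∀ v : V, v ≠ t → ∃ y, E v y := by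
      intro v hv
      obtain ⟨P, ⟨hPc, _, _, hPl⟩, hvP⟩ := hvert v
      exact chain'_exists_succ hPc hPl hvP hv
    set g : V → V := fun v => if h : ∃ y, E v y then h.choose else v with hg
    have hgE : ∀ v, v ≠ t → E v (g v) := by
      intro v hv
      rw [hg]
      simp only
      rw [dif_pos (hsucc v hv)]
      exact (hsucc v hv).choose_spec
    have hgmap : ∀ v ∈ D2, g v ∈ insert t W3 := by
      intro v hv
      rw [hD2, Finset.mem_filter] at hv
      obtain ⟨_, hvs, hvt, hvdeg⟩ := hv
      have hE := hgE v hvt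
      by_cases hgt : g v = t
      · rw [hgt]; exact Finset.mem_insert_self _ _
      · refine Finset.mem_insert_of_mem ?_
        rw [hW3, Finset.mem_filter]
        have hgs : g v ≠ s := fun h => hsrc v (h ▸ hE)
        refine ⟨Finset.mem_univ _, hgs, hgt, ?_⟩
        have hge2 : 2 ≤ indeg E (g v) + outdeg E (g v) := hdeg1 _ hgs hgt
        have hne2 : indeg E (g v) + outdeg E (g v) ≠ 2 := by
          intro h2
          rcases hdeg2 v (g v) hE hvdeg h2 with h | h | h | h
          exacts [hvs h, hvt h, hgs h, hgt h]
        omega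
    have hD2card : D2.card ≤ B' + W3.card + 1 := by
      have hfib := Finset.card_eq_sum_card_fiberwise hgmap
      have hfiber : ∀ w ∈ insert t W3,
          (D2.filter (fun v => g v = w)).card ≤ indeg E w := by
        intro w hw
        have hsub : D2.filter (fun v => g v = w) ⊆ Finset.univ.filter (fun y => E y w) := by
          intro v hv
          rw [Finset.mem_filter] at hv
          obtain ⟨hvD, hgv⟩ := hv
          have hvt : v ≠ t := by
            rw [hD2, Finset.mem_filter] at hvD
            exact hvD.2.2.1
          exact Finset.mem_filter.mpr ⟨Finset.mem_univ _, hgv ▸ hgE v hvt⟩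
        exact Finset.card_le_card hsub
      have h2 : ∑ w ∈ insert t W3, indeg E w ≤
          ∑ w ∈ insert t W3, ((indeg E w - 1) + 1) :=
        Finset.sum_le_sum (fun w _ => by omega)
      have h3 : ∑ w ∈ insert t W3, ((indeg E w - 1) + 1) =
          ∑ w ∈ insert t W3, (indeg E w - 1) + (insert t W3).card := by
        rw [Finset.sum_add_distrib, Finset.card_eq_sum_ones]
      have h4 : ∑ w ∈ insert t W3, (indeg E w - 1) ≤ B' := by
        rw [hB']
        have e1 := Finset.sum_filter_of_ne (s := insert t W3)
          (f := fun w => indeg E w - 1) (p := fun v => 2 ≤ indeg E v)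
          (by intro x _ hx; have hx' : indeg E x - 1 ≠ 0 := hx; omega)
        rw [← e1]
        refine Finset.sum_le_sum_of_subset ?_
        intro v hv
        exact Finset.mem_filter.mpr ⟨Finset.mem_univ _, (Finset.mem_filter.mp hv).2⟩
      have h5 : (insert t W3).card ≤ W3.card + 1 := Finset.card_insert_le _ _
      calc D2.card = ∑ w ∈ insert t W3, (D2.filter (fun v => g v = w)).card := hfib
        _ ≤ ∑ w ∈ insert t W3, indeg E w := Finset.sum_le_sum hfiber
        _ ≤ ∑ w ∈ insert t W3, ((indeg E w - 1) + 1) := h2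
        _ = ∑ w ∈ insert t W3, (indeg E w - 1) + (insert t W3).card := h3
        _ ≤ B' + (W3.card + 1) := add_le_add h4 h5
        _ = B' + W3.card + 1 := by omega
    have hcover : (Finset.univ : Finset V) ⊆ {s} ∪ {t} ∪ D2 ∪ W3 := by
      intro v _
      simp only [Finset.mem_union, Finset.mem_singleton]
      by_cases hvs : v = s
      · exact Or.inl (Or.inl (Or.inl hvs))
      by_cases hvt : v = t
      · exact Or.inl (Or.inl (Or.inr hvt))
      have hd := hdeg1 v hvs hvt
      by_cases h2 : indeg E v + outdeg E v = 2
      · exact Or.inl (Or.inr (by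
          rw [hD2, Finset.mem_filter]
          exact ⟨Finset.mem_univ _, hvs, hvt, h2⟩))
      · exact Or.inr (by
          rw [hW3, Finset.mem_filter]
          exact ⟨Finset.mem_univ _, hvs, hvt, by omega⟩)
    have hVcard : Fintype.card V ≤ 2 + D2.card + W3.card := by
      have hc := Finset.card_le_card hcover
      rw [Finset.card_univ] at hc
      calc Fintype.card V ≤ ({s} ∪ {t} ∪ D2 ∪ W3).card := hc
        _ ≤ ({s} ∪ {t} ∪ D2).card + W3.card := Finset.card_union_le _ _
        _ ≤ ((({s} : Finset V) ∪ {t}).card + D2.card) + W3.card :=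
            Nat.add_le_add_right (Finset.card_union_le _ _) _
        _ ≤ ((({s} : Finset V).card + ({t} : Finset V).card) + D2.card) + W3.card :=
            Nat.add_le_add_right (Nat.add_le_add_right (Finset.card_union_le _ _) _) _
        _ = 2 + D2.card + W3.card := by simp
    have hedges : ∑ v : V, outdeg E v ≤ B + Fintype.card V := by
      have e1 : ∑ v ∈ Finset.univ.filter (fun v => 1 ≤ outdeg E v), outdeg E v =
          ∑ v : V, outdeg E v :=
        Finset.sum_filter_of_ne (by intro x _ h; omega)
      have e2 : ∑ v ∈ Finset.univ.filter (fun v => 1 ≤ outdeg E v), outdeg E v ≤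
          ∑ v ∈ Finset.univ.filter (fun v => 1 ≤ outdeg E v), ((outdeg E v - 1) + 1) :=
        Finset.sum_le_sum (fun v _ => by omega)
      have e3 : ∑ v ∈ Finset.univ.filter (fun v => 1 ≤ outdeg E v), ((outdeg E v - 1) + 1) =
          ∑ v ∈ Finset.univ.filter (fun v => 1 ≤ outdeg E v), (outdeg E v - 1) +
            (Finset.univ.filter (fun v => 1 ≤ outdeg E v)).card := by
        rw [Finset.sum_add_distrib, Finset.card_eq_sum_ones]
      have e4 : ∑ v ∈ Finset.univ.filter (fun v => 1 ≤ outdeg E v), (outdeg E v - 1) ≤ B := by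
        rw [hB]
        have e5 := Finset.sum_filter_of_ne (s := Finset.univ.filter (fun v => 1 ≤ outdeg E v))
          (f := fun w => outdeg E w - 1) (p := fun v => 2 ≤ outdeg E v)
          (by intro x _ hx; have hx' : outdeg E x - 1 ≠ 0 := hx; omega)
        rw [← e5]
        refine Finset.sum_le_sum_of_subset ?_
        intro v hv
        exact Finset.mem_filter.mpr ⟨Finset.mem_univ _, (Finset.mem_filter.mp hv).2⟩
      have e6 : (Finset.univ.filter (fun v => 1 ≤ outdeg E v)).card ≤ Fintype.card V := by
        rw [← Finset.card_univ]
        exact Finset.card_le_card (Finset.filter_subset _ _)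
      calc ∑ v : V, outdeg E v
          = ∑ v ∈ Finset.univ.filter (fun v => 1 ≤ outdeg E v), outdeg E v := e1.symm
        _ ≤ ∑ v ∈ Finset.univ.filter (fun v => 1 ≤ outdeg E v), ((outdeg E v - 1) + 1) := e2
        _ = ∑ v ∈ Finset.univ.filter (fun v => 1 ≤ outdeg E v), (outdeg E v - 1) +
            (Finset.univ.filter (fun v => 1 ≤ outdeg E v)).card := e3
        _ ≤ B + Fintype.card V := add_le_add e4 e6
    constructor
    · nlinarith [hVcard, hD2card, hW3card, hBk, hB'k]
    · nlinarith [hedges, hVcard, hD2card, hW3card, hBk, hB'k]
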